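/- Let F : ℝⁿ → ℝⁿ be continuously differentiable with F(r) = 0 and the derivative DF(r) invertible. Define the deflated map G(x) = (1/‖x−r‖² + 1) F(x) for x ≠ r. Then for every sequence x_i → r with x_i ≠ r, liminf ‖G(x_i)‖ > 0; in fact ‖G(x_i)‖ does not tend to 0. -/

import Mathlib

theorem deflated_map_bounded_away_from_zero (n : ℕ)
    (F : EuclideanSpace ℝ (Fin n) → EuclideanSpace ℝ (Fin n))
    (r : EuclideanSpace ℝ (Fin n))
    (hF : ContDiff ℝ 1 F) (hFr : F r = 0)
    (hinv : ∃ e : EuclideanSpace ℝ (Fin n) ≃L[ℝ] EuclideanSpace ℝ (Fin n),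
      (e : EuclideanSpace ℝ (Fin n) →L[ℝ] EuclideanSpace ℝ (Fin n)) = fderiv ℝ F r)
    (x : ℕ → EuclideanSpace ℝ (Fin n))
    (hxne : ∀ i, x i ≠ r)
    (hxlim : Filter.Tendsto x Filter.atTop (nhds r)) :
    (∃ ε > 0, ∀ᶠ i in Filter.atTop,
        ε ≤ ‖(1 / ‖x i - r‖ ^ 2 + 1) • F (x i)‖) ∧
      ¬ Filter.Tendsto (fun i => ‖(1 / ‖x i - r‖ ^ 2 + 1) • F (x i)‖)
        Filter.atTop (nhds 0) := by
  obtain ⟨e, he⟩ := hinv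
  -- handle the subsingleton case
  rcases e.subsingleton_or_nnnorm_symm_pos with hsub | hN
  · exact absurd (Subsingleton.elim (x 0) r) (hxne 0)
  have hstrict : HasStrictFDerivAt F
      (e : EuclideanSpace ℝ (Fin n) →L[ℝ] EuclideanSpace ℝ (Fin n)) r := by
    rw [he]; exact hF.hasStrictFDerivAt one_ne_zero
  obtain ⟨s, hrs, hsopen, happrox⟩ := hstrict.approximates_deriv_on_open_nhds
  set N := ‖(e.symm : EuclideanSpace ℝ (Fin n) →L[ℝ] EuclideanSpace ℝ (Fin n))‖₊ with hNdef
  have hc : (N⁻¹ / 2 : NNReal) < N⁻¹ := NNReal.half_lt_self (ne_of_gt (inv_pos.2 hN))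
  have halip := happrox.antilipschitz (Or.inr hc)
  set K : NNReal := (N⁻¹ - N⁻¹ / 2)⁻¹ with hKdef
  have hKpos : 0 < (K : ℝ) := by
    have : (0 : NNReal) < N⁻¹ - N⁻¹ / 2 := tsub_pos_of_lt hc
    positivity
  -- key lower bound: for x' ∈ s, ‖x' - r‖ ≤ K * ‖F x'‖
  have key : ∀ x' ∈ s, ‖x' - r‖ ≤ (K : ℝ) * ‖F x'‖ := by
    intro x' hx'
    have := halip.le_mul_dist ⟨x', hx'⟩ ⟨r, hrs⟩
    simpa [Set.restrict, Subtype.dist_eq, dist_eq_norm, hFr] using this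
  have hsx : ∀ᶠ i in Filter.atTop, x i ∈ s := hxlim (hsopen.mem_nhds hrs)
  have hsmall : ∀ᶠ i in Filter.atTop, ‖x i - r‖ ≤ 1 := by
    have : ∀ᶠ i in Filter.atTop, x i ∈ Metric.closedBall r 1 :=
      hxlim (Metric.closedBall_mem_nhds r one_pos)
    simpa [Metric.mem_closedBall, dist_eq_norm] using this
  have hmain : ∀ᶠ i in Filter.atTop, (K : ℝ)⁻¹ ≤ ‖(1 / ‖x i - r‖ ^ 2 + 1) • F (x i)‖ := by
    filter_upwards [hsx, hsmall] with i his hilt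
    have hd : 0 < ‖x i - r‖ := by
      rw [norm_pos_iff]
      exact sub_ne_zero_of_ne (hxne i)
    have hFi : (K : ℝ)⁻¹ * ‖x i - r‖ ≤ ‖F (x i)‖ := by
      rw [inv_mul_le_iff₀ hKpos]
      exact key _ his
    have hcoef : (0 : ℝ) < 1 / ‖x i - r‖ ^ 2 + 1 := by positivity
    rw [norm_smul, Real.norm_eq_abs, abs_of_pos hcoef]
    calc (K : ℝ)⁻¹ = (K : ℝ)⁻¹ / ‖x i - r‖ * ‖x i - r‖ := by field_simp
      _ ≤ (K : ℝ)⁻¹ / ‖x i - r‖ ^ 2 * ‖x i - r‖ := by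
          apply mul_le_mul_of_nonneg_right _ hd.le
          apply div_le_div_of_nonneg_left (by positivity) (by positivity)
          calc ‖x i - r‖ ^ 2 = ‖x i - r‖ * ‖x i - r‖ := sq ‖x i - r‖
            _ ≤ 1 * ‖x i - r‖ := mul_le_mul_of_nonneg_right hilt hd.le
            _ = ‖x i - r‖ := one_mul _
      _ = 1 / ‖x i - r‖ ^ 2 * ((K : ℝ)⁻¹ * ‖x i - r‖) := by ring
      _ ≤ 1 / ‖x i - r‖ ^ 2 * ‖F (x i)‖ := by
          apply mul_le_mul_of_nonneg_left hFi (by positivity)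
      _ ≤ (1 / ‖x i - r‖ ^ 2 + 1) * ‖F (x i)‖ := by
          apply mul_le_mul_of_nonneg_right _ (norm_nonneg _)
          linarith
  refine ⟨⟨(K : ℝ)⁻¹, inv_pos.2 hKpos, hmain⟩, ?_⟩
  intro htend
  have h2 : ∀ᶠ i in Filter.atTop,
      ‖(1 / ‖x i - r‖ ^ 2 + 1) • F (x i)‖ < (K : ℝ)⁻¹ :=
    Filter.Eventually.mono (htend (Metric.ball_mem_nhds 0 (inv_pos.2 hKpos))) (fun i hi => by
      simpa [Real.dist_eq, abs_of_nonneg (norm_nonneg _)] using hi)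
  obtain ⟨i, h1, h2⟩ := (hmain.and h2).exists
  exact absurd h1 (not_le.2 h2)
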